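/- Let μ₀ be a probability measure on X and Φ, R : X → ℝ nonnegative measurable functions, with Z = ∫ exp(-Φ - R) dμ₀ > 0. For sequences Φ_N, R_N of nonnegative measurable functions with normalization constants Z_N ≥ C > 0 uniformly in N, Z ≥ C, suppose for every ε > 0 there exist sequences a_N(ε), b_N(ε) → 0 such that the set X_ε = {u : |Φ(u) - Φ_N(u)| ≤ a_N(ε) and |R(u) - R_N(u)| ≤ b_N(ε)} satisfies μ₀(X_ε) ≥ 1 - ε for all N. Then the Hellinger distance between the measures μ (with density exp(-Φ-R)/Z w.r.t. μ₀) and μ_N (with density exp(-Φ_N-R_N)/Z_N w.r.t. μ₀) tends to 0 as N → ∞. -/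

import Mathlib

open MeasureTheory Real Filter

lemma exp_neg_lip {x y : ℝ} (hx : 0 ≤ x) (hy : 0 ≤ y) :
    |Real.exp (-x) - Real.exp (-y)| ≤ |x - y| := by
  wlog h : x ≤ y generalizing x y
  · rw [abs_sub_comm, abs_sub_comm x y]; exact this hy hx (le_of_not_ge h)
  have h1 : Real.exp (-y) ≤ Real.exp (-x) := Real.exp_le_exp.2 (by linarith)
  rw [abs_of_nonneg (by linarith), abs_of_nonpos (by linarith)]
  have h2 : 1 - (y - x) ≤ Real.exp (-(y - x)) := by
    have := Real.add_one_le_exp (-(y - x)); linarith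
  have h3 : Real.exp (-y) = Real.exp (-x) * Real.exp (-(y - x)) := by
    rw [← Real.exp_add]; ring_nf
  have h4 : Real.exp (-x) ≤ 1 := Real.exp_le_one_iff.2 (by linarith)
  have h5 : 0 < Real.exp (-x) := Real.exp_pos _
  nlinarith

lemma sqrt_sub_le_of_le {C a b : ℝ} (hC : 0 < C) (ha : C ≤ a) (hb : C ≤ b) :
    |Real.sqrt a - Real.sqrt b| ≤ |a - b| / (2 * Real.sqrt C) := by
  have hsC : 0 < Real.sqrt C := Real.sqrt_pos.2 hC
  rw [le_div_iff₀ (by positivity)]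
  have h1 : Real.sqrt C ≤ Real.sqrt a := Real.sqrt_le_sqrt ha
  have h2 : Real.sqrt C ≤ Real.sqrt b := Real.sqrt_le_sqrt hb
  have ka := Real.sq_sqrt (hC.le.trans ha)
  have kb := Real.sq_sqrt (hC.le.trans hb)
  have key : (Real.sqrt a - Real.sqrt b) * (Real.sqrt a + Real.sqrt b) = a - b := by
    nlinarith
  calc |Real.sqrt a - Real.sqrt b| * (2 * Real.sqrt C)
      ≤ |Real.sqrt a - Real.sqrt b| * (Real.sqrt a + Real.sqrt b) :=
        mul_le_mul_of_nonneg_left (by linarith) (abs_nonneg _)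
    _ = |(Real.sqrt a - Real.sqrt b) * (Real.sqrt a + Real.sqrt b)| := by
        rw [abs_mul, abs_of_nonneg (add_nonneg (Real.sqrt_nonneg a) (Real.sqrt_nonneg b))]
    _ = |a - b| := by rw [key]

set_option maxHeartbeats 1000000 in
theorem hellinger_distance_tendsto_zero
    {X : Type*} [MeasurableSpace X]
    (μ₀ : Measure X) [IsProbabilityMeasure μ₀]
    (Φ R : X → ℝ) (ΦN RN : ℕ → X → ℝ)
    (hΦm : Measurable Φ) (hRm : Measurable R)
    (hΦNm : ∀ N, Measurable (ΦN N)) (hRNm : ∀ N, Measurable (RN N))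
    (hΦ0 : ∀ u, 0 ≤ Φ u) (hR0 : ∀ u, 0 ≤ R u)
    (hΦN0 : ∀ N u, 0 ≤ ΦN N u) (hRN0 : ∀ N u, 0 ≤ RN N u)
    (Z : ℝ) (ZN : ℕ → ℝ) (C : ℝ) (hC : 0 < C)
    (hZ : Z = ∫ u, Real.exp (-(Φ u) - R u) ∂μ₀)
    (hZN : ∀ N, ZN N = ∫ u, Real.exp (-(ΦN N u) - RN N u) ∂μ₀)
    (hZC : C ≤ Z) (hZNC : ∀ N, C ≤ ZN N)
    (happrox : ∀ ε > (0 : ℝ), ∃ a b : ℕ → ℝ,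
      Tendsto a atTop (nhds 0) ∧ Tendsto b atTop (nhds 0) ∧
      (∀ N, 0 ≤ a N ∧ 0 ≤ b N) ∧
      ∀ N, ENNReal.ofReal (1 - ε) ≤
        μ₀ {u : X | |Φ u - ΦN N u| ≤ a N ∧ |R u - RN N u| ≤ b N}) :
    Tendsto (fun N => Real.sqrt ((1 / 2) *
        ∫ u, (Real.sqrt (Real.exp (-(Φ u) - R u) / Z)
            - Real.sqrt (Real.exp (-(ΦN N u) - RN N u) / ZN N)) ^ 2 ∂μ₀))
      atTop (nhds 0) := by
  have hZpos : 0 < Z := hC.trans_le hZC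
  have hZNpos : ∀ N, 0 < ZN N := fun N => hC.trans_le (hZNC N)
  have hsC : 0 < Real.sqrt C := Real.sqrt_pos.2 hC
  -- basic bounds on densities
  have hf1 : ∀ u, Real.exp (-(Φ u) - R u) ≤ 1 := fun u =>
    Real.exp_le_one_iff.2 (by linarith [hΦ0 u, hR0 u])
  have hg1 : ∀ N u, Real.exp (-(ΦN N u) - RN N u) ≤ 1 := fun N u =>
    Real.exp_le_one_iff.2 (by linarith [hΦN0 N u, hRN0 N u])
  have hfm : Measurable fun u => Real.exp (-(Φ u) - R u) := (hΦm.neg.sub hRm).exp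
  have hgm : ∀ N, Measurable fun u => Real.exp (-(ΦN N u) - RN N u) :=
    fun N => ((hΦNm N).neg.sub (hRNm N)).exp
  have hfint : Integrable (fun u => Real.exp (-(Φ u) - R u)) μ₀ := by
    refine (integrable_const (1 : ℝ)).mono' hfm.aestronglyMeasurable
      (Eventually.of_forall fun u => ?_)
    rw [Real.norm_eq_abs, abs_of_pos (Real.exp_pos _)]; exact hf1 u
  have hgint : ∀ N, Integrable (fun u => Real.exp (-(ΦN N u) - RN N u)) μ₀ := by
    intro N
    refine (integrable_const (1 : ℝ)).mono' (hgm N).aestronglyMeasurable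
      (Eventually.of_forall fun u => ?_)
    rw [Real.norm_eq_abs, abs_of_pos (Real.exp_pos _)]; exact hg1 N u
  -- the Hellinger integrands
  have hhm : ∀ N, Measurable fun u =>
      (Real.sqrt (Real.exp (-(Φ u) - R u) / Z)
        - Real.sqrt (Real.exp (-(ΦN N u) - RN N u) / ZN N)) ^ 2 := by
    intro N
    exact (((hfm.div_const Z).sqrt.sub ((hgm N).div_const (ZN N)).sqrt).pow measurable_const)
  have hhbound : ∀ N u,
      (Real.sqrt (Real.exp (-(Φ u) - R u) / Z)
        - Real.sqrt (Real.exp (-(ΦN N u) - RN N u) / ZN N)) ^ 2 ≤ 2 / C := by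
    intro N u
    have h1 : Real.sqrt (Real.exp (-(Φ u) - R u) / Z) ^ 2 = Real.exp (-(Φ u) - R u) / Z :=
      Real.sq_sqrt (div_nonneg (Real.exp_pos _).le hZpos.le)
    have h2 : Real.sqrt (Real.exp (-(ΦN N u) - RN N u) / ZN N) ^ 2
        = Real.exp (-(ΦN N u) - RN N u) / ZN N :=
      Real.sq_sqrt (div_nonneg (Real.exp_pos _).le (hZNpos N).le)
    have h3 : Real.exp (-(Φ u) - R u) / Z ≤ 1 / C :=
      div_le_div₀ (by norm_num) (hf1 u) hC hZC
    have h4 : Real.exp (-(ΦN N u) - RN N u) / ZN N ≤ 1 / C :=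
      div_le_div₀ (by norm_num) (hg1 N u) hC (hZNC N)
    have h5 : 0 ≤ Real.sqrt (Real.exp (-(Φ u) - R u) / Z) := Real.sqrt_nonneg _
    have h6 : 0 ≤ Real.sqrt (Real.exp (-(ΦN N u) - RN N u) / ZN N) := Real.sqrt_nonneg _
    have h7 : (2 : ℝ) / C = 1 / C + 1 / C := by ring
    nlinarith
  have hhint : ∀ N, Integrable (fun u =>
      (Real.sqrt (Real.exp (-(Φ u) - R u) / Z)
        - Real.sqrt (Real.exp (-(ΦN N u) - RN N u) / ZN N)) ^ 2) μ₀ := by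
    intro N
    refine (integrable_const ((2 : ℝ) / C)).mono' (hhm N).aestronglyMeasurable
      (Eventually.of_forall fun u => ?_)
    rw [Real.norm_eq_abs, abs_of_nonneg (sq_nonneg _)]
    exact hhbound N u
  have hI0 : ∀ N, 0 ≤ ∫ u, (Real.sqrt (Real.exp (-(Φ u) - R u) / Z)
      - Real.sqrt (Real.exp (-(ΦN N u) - RN N u) / ZN N)) ^ 2 ∂μ₀ :=
    fun N => integral_nonneg fun u => sq_nonneg _
  -- main estimate
  have key : ∀ δ > (0 : ℝ), ∃ N₀ : ℕ, ∀ N ≥ N₀,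
      (∫ u, (Real.sqrt (Real.exp (-(Φ u) - R u) / Z)
        - Real.sqrt (Real.exp (-(ΦN N u) - RN N u) / ZN N)) ^ 2 ∂μ₀) ≤ δ := by
    intro δ hδ
    obtain ⟨K, hK⟩ : ∃ K : ℝ, K = (1 / (2 * Real.sqrt C) + 1 / (C * Real.sqrt C)) ^ 2 :=
      ⟨_, rfl⟩
    have hKpos : 0 < K := by rw [hK]; positivity
    obtain ⟨ε, hεdef⟩ : ∃ ε : ℝ, ε = min 1 (min (δ * C / 4) (δ / (2 * K))) := ⟨_, rfl⟩
    have hεpos : 0 < ε := by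
      rw [hεdef]; exact lt_min one_pos (lt_min (by positivity) (by positivity))
    have hε1 : ε ≤ 1 := hεdef ▸ min_le_left _ _
    have hε2 : ε ≤ δ * C / 4 := hεdef ▸ le_trans (min_le_right _ _) (min_le_left _ _)
    have hε3 : ε ≤ δ / (2 * K) := hεdef ▸ le_trans (min_le_right _ _) (min_le_right _ _)
    obtain ⟨a, b, hat, hbt, hab0, hμ⟩ := happrox ε hεpos
    have habt : Tendsto (fun N => a N + b N) atTop (nhds 0) := by
      simpa using hat.add hbt
    obtain ⟨N₀, hN₀⟩ := Metric.tendsto_atTop.mp habt ε hεpos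
    refine ⟨N₀, fun N hN => ?_⟩
    have habε : a N + b N ≤ ε := by
      have := hN₀ N hN
      rw [Real.dist_eq, sub_zero] at this
      have := le_abs_self (a N + b N)
      linarith
    have hab0' : 0 ≤ a N + b N := by have := hab0 N; linarith [this.1, this.2]
    set A : Set X := {u : X | |Φ u - ΦN N u| ≤ a N ∧ |R u - RN N u| ≤ b N} with hAdef
    have hA : MeasurableSet A := by
      rw [hAdef, Set.setOf_and]
      exact (measurableSet_le ((hΦm.sub (hΦNm N)).abs) measurable_const).inter
        (measurableSet_le ((hRm.sub (hRNm N)).abs) measurable_const)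
    have hAc : (μ₀ Aᶜ).toReal ≤ ε := by
      refine ENNReal.toReal_le_of_le_ofReal hεpos.le ?_
      have h2 : ENNReal.ofReal (1 - ε) ≤ μ₀ A := hμ N
      have h3 : μ₀ Aᶜ = 1 - μ₀ A := by
        rw [measure_compl hA (measure_ne_top _ _), measure_univ]
      rw [h3]
      calc (1 : ENNReal) - μ₀ A ≤ 1 - ENNReal.ofReal (1 - ε) := tsub_le_tsub_left h2 1
        _ = ENNReal.ofReal 1 - ENNReal.ofReal (1 - ε) := by rw [ENNReal.ofReal_one]
        _ = ENNReal.ofReal (1 - (1 - ε)) := (ENNReal.ofReal_sub _ (by linarith)).symm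
        _ = ENNReal.ofReal ε := by norm_num
    have hA1 : (μ₀ A).toReal ≤ 1 := by
      have := ENNReal.toReal_mono (ENNReal.one_ne_top) (prob_le_one (μ := μ₀) (s := A))
      simpa using this
    -- bound on |Z - ZN N|
    have hZdiff : |Z - ZN N| ≤ (a N + b N) + ε := by
      have hsplit : Z - ZN N = (∫ u in A, (Real.exp (-(Φ u) - R u)
          - Real.exp (-(ΦN N u) - RN N u)) ∂μ₀)
          + ∫ u in Aᶜ, (Real.exp (-(Φ u) - R u) - Real.exp (-(ΦN N u) - RN N u)) ∂μ₀ := by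
        have h0 := integral_add_compl hA (hfint.sub (hgint N))
        rw [hZ, hZN, ← integral_sub hfint (hgint N)]
        exact h0.symm
      have hb1 : ‖∫ u in A, (Real.exp (-(Φ u) - R u)
          - Real.exp (-(ΦN N u) - RN N u)) ∂μ₀‖ ≤ (a N + b N) * (μ₀ A).toReal := by
        refine norm_setIntegral_le_of_norm_le_const (measure_lt_top _ _) (fun u hu => ?_)
        rw [hAdef] at hu
        obtain ⟨hu1, hu2⟩ := hu
        rw [Real.norm_eq_abs]
        have e1 : -(Φ u) - R u = -(Φ u + R u) := by ring
        have e2 : -(ΦN N u) - RN N u = -(ΦN N u + RN N u) := by ring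
        rw [e1, e2]
        calc |Real.exp (-(Φ u + R u)) - Real.exp (-(ΦN N u + RN N u))|
            ≤ |(Φ u + R u) - (ΦN N u + RN N u)| :=
              exp_neg_lip (by linarith [hΦ0 u, hR0 u]) (by linarith [hΦN0 N u, hRN0 N u])
          _ = |(Φ u - ΦN N u) + (R u - RN N u)| := by ring_nf
          _ ≤ |Φ u - ΦN N u| + |R u - RN N u| := abs_add_le _ _
          _ ≤ a N + b N := by linarith
      have hb2 : ‖∫ u in Aᶜ, (Real.exp (-(Φ u) - R u)
          - Real.exp (-(ΦN N u) - RN N u)) ∂μ₀‖ ≤ 1 * (μ₀ Aᶜ).toReal := by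
        refine norm_setIntegral_le_of_norm_le_const (measure_lt_top _ _) (fun u _ => ?_)
        rw [Real.norm_eq_abs]
        have := Real.exp_pos (-(Φ u) - R u)
        have := Real.exp_pos (-(ΦN N u) - RN N u)
        have := hf1 u
        have := hg1 N u
        rw [abs_le]; constructor <;> linarith
      calc |Z - ZN N| ≤ ‖∫ u in A, (Real.exp (-(Φ u) - R u)
            - Real.exp (-(ΦN N u) - RN N u)) ∂μ₀‖
          + ‖∫ u in Aᶜ, (Real.exp (-(Φ u) - R u) - Real.exp (-(ΦN N u) - RN N u)) ∂μ₀‖ := by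
            rw [hsplit, ← Real.norm_eq_abs]; exact norm_add_le _ _
        _ ≤ (a N + b N) * (μ₀ A).toReal + 1 * (μ₀ Aᶜ).toReal := add_le_add hb1 hb2
        _ ≤ (a N + b N) * 1 + 1 * ε := by
            gcongr
        _ = (a N + b N) + ε := by ring
    -- bound on |√Z - √(ZN N)|
    have hsqZ : |Real.sqrt Z - Real.sqrt (ZN N)| ≤ ε / Real.sqrt C := by
      calc |Real.sqrt Z - Real.sqrt (ZN N)| ≤ |Z - ZN N| / (2 * Real.sqrt C) :=
            sqrt_sub_le_of_le hC hZC (hZNC N)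
        _ ≤ (2 * ε) / (2 * Real.sqrt C) := by
            have hnum : |Z - ZN N| ≤ 2 * ε := by linarith
            exact div_le_div₀ (by linarith) hnum (by positivity) le_rfl
        _ = ε / Real.sqrt C := mul_div_mul_left _ _ two_ne_zero
    -- pointwise bound on A
    have hpoint : ∀ u ∈ A,
        (Real.sqrt (Real.exp (-(Φ u) - R u) / Z)
          - Real.sqrt (Real.exp (-(ΦN N u) - RN N u) / ZN N)) ^ 2 ≤ K * ε ^ 2 := by
      intro u hu
      rw [hAdef] at hu
      obtain ⟨hu1, hu2⟩ := hu
      have hsZ : 0 < Real.sqrt Z := Real.sqrt_pos.2 hZpos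
      have hsZN : 0 < Real.sqrt (ZN N) := Real.sqrt_pos.2 (hZNpos N)
      have hsZC : Real.sqrt C ≤ Real.sqrt Z := Real.sqrt_le_sqrt hZC
      have hsZNC : Real.sqrt C ≤ Real.sqrt (ZN N) := Real.sqrt_le_sqrt (hZNC N)
      rw [Real.sqrt_div (Real.exp_pos _).le, Real.sqrt_div (Real.exp_pos _).le]
      set x := Real.sqrt (Real.exp (-(Φ u) - R u)) with hxdef
      set y := Real.sqrt (Real.exp (-(ΦN N u) - RN N u)) with hydef
      have hy0 : 0 ≤ y := Real.sqrt_nonneg _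
      have hy1 : y ≤ 1 := Real.sqrt_le_one.mpr (hg1 N u)
      have hxe : x = Real.exp (-((Φ u + R u) / 2)) := by
        rw [hxdef, ← Real.exp_half]; congr 1; ring
      have hye : y = Real.exp (-((ΦN N u + RN N u) / 2)) := by
        rw [hydef, ← Real.exp_half]; congr 1; ring
      have hxy : |x - y| ≤ ε / 2 := by
        rw [hxe, hye]
        calc |Real.exp (-((Φ u + R u) / 2)) - Real.exp (-((ΦN N u + RN N u) / 2))|
            ≤ |(Φ u + R u) / 2 - (ΦN N u + RN N u) / 2| :=
              exp_neg_lip (by linarith [hΦ0 u, hR0 u]) (by linarith [hΦN0 N u, hRN0 N u])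
          _ ≤ ε / 2 := by
              have e : (Φ u + R u) / 2 - (ΦN N u + RN N u) / 2
                  = ((Φ u - ΦN N u) + (R u - RN N u)) / 2 := by ring
              rw [e, abs_div, abs_two]
              have h := abs_add_le (Φ u - ΦN N u) (R u - RN N u)
              linarith
      have hinv : |1 / Real.sqrt Z - 1 / Real.sqrt (ZN N)| ≤ ε / (C * Real.sqrt C) := by
        have e : 1 / Real.sqrt Z - 1 / Real.sqrt (ZN N)
            = (Real.sqrt (ZN N) - Real.sqrt Z) / (Real.sqrt Z * Real.sqrt (ZN N)) := by
          field_simp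
        rw [e, abs_div, abs_of_pos (mul_pos hsZ hsZN)]
        calc |Real.sqrt (ZN N) - Real.sqrt Z| / (Real.sqrt Z * Real.sqrt (ZN N))
            ≤ (ε / Real.sqrt C) / (Real.sqrt C * Real.sqrt C) := by
              refine div_le_div₀ (div_nonneg hεpos.le hsC.le) ?_ (by positivity)
                (mul_le_mul hsZC hsZNC hsC.le (Real.sqrt_nonneg Z))
              rw [abs_sub_comm]; exact hsqZ
          _ = ε / (C * Real.sqrt C) := by
              rw [Real.mul_self_sqrt hC.le, div_div, mul_comm]
      have hdecomp : x / Real.sqrt Z - y / Real.sqrt (ZN N)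
          = (x - y) / Real.sqrt Z + y * (1 / Real.sqrt Z - 1 / Real.sqrt (ZN N)) := by
        field_simp
        ring
      have habsD : |x / Real.sqrt Z - y / Real.sqrt (ZN N)|
          ≤ ε / (2 * Real.sqrt C) + ε / (C * Real.sqrt C) := by
        rw [hdecomp]
        calc |(x - y) / Real.sqrt Z + y * (1 / Real.sqrt Z - 1 / Real.sqrt (ZN N))|
            ≤ |(x - y) / Real.sqrt Z| + |y * (1 / Real.sqrt Z - 1 / Real.sqrt (ZN N))| :=
              abs_add_le _ _
          _ = |x - y| / Real.sqrt Z + y * |1 / Real.sqrt Z - 1 / Real.sqrt (ZN N)| := by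
              rw [abs_div, abs_of_pos hsZ, abs_mul, abs_of_nonneg hy0]
          _ ≤ (ε / 2) / Real.sqrt C + 1 * (ε / (C * Real.sqrt C)) := by
              refine add_le_add (div_le_div₀ (by linarith) hxy hsC hsZC) ?_
              exact mul_le_mul hy1 hinv (abs_nonneg _) (by norm_num)
          _ = ε / (2 * Real.sqrt C) + ε / (C * Real.sqrt C) := by
              rw [div_div, one_mul]
      calc (x / Real.sqrt Z - y / Real.sqrt (ZN N)) ^ 2
          = |x / Real.sqrt Z - y / Real.sqrt (ZN N)| ^ 2 := (sq_abs _).symm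
        _ ≤ (ε / (2 * Real.sqrt C) + ε / (C * Real.sqrt C)) ^ 2 := by
            apply pow_le_pow_left₀ (abs_nonneg _) habsD
        _ = K * ε ^ 2 := by rw [hK]; ring
    -- assemble
    have hsplit : (∫ u, (Real.sqrt (Real.exp (-(Φ u) - R u) / Z)
        - Real.sqrt (Real.exp (-(ΦN N u) - RN N u) / ZN N)) ^ 2 ∂μ₀)
        = (∫ u in A, (Real.sqrt (Real.exp (-(Φ u) - R u) / Z)
            - Real.sqrt (Real.exp (-(ΦN N u) - RN N u) / ZN N)) ^ 2 ∂μ₀)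
          + ∫ u in Aᶜ, (Real.sqrt (Real.exp (-(Φ u) - R u) / Z)
            - Real.sqrt (Real.exp (-(ΦN N u) - RN N u) / ZN N)) ^ 2 ∂μ₀ :=
      (integral_add_compl hA (hhint N)).symm
    have hb1 : (∫ u in A, (Real.sqrt (Real.exp (-(Φ u) - R u) / Z)
        - Real.sqrt (Real.exp (-(ΦN N u) - RN N u) / ZN N)) ^ 2 ∂μ₀) ≤ K * ε ^ 2 := by
      have h := norm_setIntegral_le_of_norm_le_const (μ := μ₀) (s := A)
        (f := fun u => (Real.sqrt (Real.exp (-(Φ u) - R u) / Z)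
          - Real.sqrt (Real.exp (-(ΦN N u) - RN N u) / ZN N)) ^ 2)
        (measure_lt_top _ _) (fun u hu => by
          rw [Real.norm_eq_abs, abs_of_nonneg (sq_nonneg _)]; exact hpoint u hu)
      rw [Real.norm_eq_abs] at h
      calc (∫ u in A, (Real.sqrt (Real.exp (-(Φ u) - R u) / Z)
            - Real.sqrt (Real.exp (-(ΦN N u) - RN N u) / ZN N)) ^ 2 ∂μ₀)
          ≤ K * ε ^ 2 * (μ₀ A).toReal := le_trans (le_abs_self _) h
        _ ≤ K * ε ^ 2 * 1 :=
          mul_le_mul_of_nonneg_left hA1 (mul_nonneg hKpos.le (sq_nonneg ε))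
        _ = K * ε ^ 2 := mul_one _
    have hb2 : (∫ u in Aᶜ, (Real.sqrt (Real.exp (-(Φ u) - R u) / Z)
        - Real.sqrt (Real.exp (-(ΦN N u) - RN N u) / ZN N)) ^ 2 ∂μ₀) ≤ (2 / C) * ε := by
      have h := norm_setIntegral_le_of_norm_le_const (μ := μ₀) (s := Aᶜ)
        (f := fun u => (Real.sqrt (Real.exp (-(Φ u) - R u) / Z)
          - Real.sqrt (Real.exp (-(ΦN N u) - RN N u) / ZN N)) ^ 2)
        (measure_lt_top _ _) (fun u _ => by
          rw [Real.norm_eq_abs, abs_of_nonneg (sq_nonneg _)]; exact hhbound N u)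
      rw [Real.norm_eq_abs] at h
      calc (∫ u in Aᶜ, (Real.sqrt (Real.exp (-(Φ u) - R u) / Z)
            - Real.sqrt (Real.exp (-(ΦN N u) - RN N u) / ZN N)) ^ 2 ∂μ₀)
          ≤ 2 / C * (μ₀ Aᶜ).toReal := le_trans (le_abs_self _) h
        _ ≤ 2 / C * ε :=
          mul_le_mul_of_nonneg_left hAc (div_nonneg (by norm_num) hC.le)
    have hfin1 : K * ε ^ 2 ≤ δ / 2 := by
      have h1 : K * ε ^ 2 ≤ K * ε := by
        nlinarith [mul_nonneg (mul_nonneg hKpos.le hεpos.le) (by linarith : (0:ℝ) ≤ 1 - ε)]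
      have h2 : K * ε ≤ δ / 2 := by
        rw [le_div_iff₀ (mul_pos two_pos hKpos)] at hε3
        nlinarith
      linarith
    have hfin2 : (2 / C) * ε ≤ δ / 2 := by
      rw [div_mul_eq_mul_div, div_le_div_iff₀ hC (by norm_num)]
      nlinarith
    rw [hsplit]
    linarith
  -- conclude
  have hItends : Tendsto (fun N => ∫ u, (Real.sqrt (Real.exp (-(Φ u) - R u) / Z)
      - Real.sqrt (Real.exp (-(ΦN N u) - RN N u) / ZN N)) ^ 2 ∂μ₀) atTop (nhds 0) := by
    rw [Metric.tendsto_atTop]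
    intro δ hδ
    obtain ⟨N₀, hN₀⟩ := key (δ / 2) (by linarith)
    refine ⟨N₀, fun N hN => ?_⟩
    rw [Real.dist_eq, sub_zero, abs_of_nonneg (hI0 N)]
    linarith [hN₀ N hN]
  have h2 : Tendsto (fun N => (1 / 2 : ℝ) * ∫ u, (Real.sqrt (Real.exp (-(Φ u) - R u) / Z)
      - Real.sqrt (Real.exp (-(ΦN N u) - RN N u) / ZN N)) ^ 2 ∂μ₀) atTop (nhds 0) := by
    simpa using hItends.const_mul (1 / 2 : ℝ)
  have h3 := (Real.continuous_sqrt.tendsto 0).comp h2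
  rw [Real.sqrt_zero] at h3
  exact h3
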